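/- Let α ∈ B₃ be a summit element with summit exponent u such that δ^{-u}·α ≠ 1 and π(α) is a 3-cycle. Then there exists a nondecreasing word w whose last two letters both equal 1 such that α is conjugate to δᵘ·∏w; in other words, α is conjugate to δᵘ·P·a₁² where P·a₁² is a nondecreasing positive word. -/

import Mathlib

namespace Braid

/-- Relations of the dual (band-generator) presentation of the 3-braid group:
`a (i+1) * a i = a (i+2) * a (i+1)` for all `i : ZMod 3`. -/
def braidRels : Set (FreeGroup (ZMod 3)) :=
  { r | ∃ i : ZMod 3,
      r = FreeGroup.of (i + 1) * FreeGroup.of i *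
          (FreeGroup.of (i + 2) * FreeGroup.of (i + 1))⁻¹ }

/-- The 3-braid group with the band-generator presentation. -/
abbrev B3 := PresentedGroup braidRels

/-- The band generators `a i`, `i : ZMod 3`. -/
def a (i : ZMod 3) : B3 := PresentedGroup.of i

/-- The fundamental element `δ = a₂ * a₁`. -/
def δ : B3 := a 2 * a 1

/-- The submonoid of positive braids. -/
def Pos : Submonoid B3 := Submonoid.closure (Set.range a)

/-- The exponent-sum homomorphism, sending each generator to `1 : ℤ`. -/
def eHom : B3 →* Multiplicative ℤ :=
  PresentedGroup.toGroup (f := fun _ => Multiplicative.ofAdd (1 : ℤ)) (by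
    rintro r ⟨i, rfl⟩
    simp only [map_mul, map_inv, FreeGroup.lift_apply_of]
    group)

/-- The exponent sum (letter length on positive braids) as an integer. -/
def elen (x : B3) : ℤ := Multiplicative.toAdd (eHom x)

/-- The right complement `X* = X⁻¹ * δ^{e(X)}`. -/
def rc (X : B3) : B3 := X⁻¹ * δ ^ elen X

/-- The `n`-th power of the rotation automorphism `τ`: `τ^n (x) = δ^{-n} * x * δ^n`. -/
def tauPow (n : ℤ) (x : B3) : B3 := δ ^ (-n) * x * δ ^ n

/-- The positive braid represented by a list of generator indices. -/
def wordProd (l : List (ZMod 3)) : B3 := (l.map a).prod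

/-- A word is nondecreasing if each letter index is the previous one or the previous one
plus `1` (mod 3). -/
def NDWord (l : List (ZMod 3)) : Prop :=
  l.Chain' (fun x y => y = x ∨ y = x + 1)

/-- The syllable number of a word: the number of maximal constant blocks. -/
def syl : List (ZMod 3) → ℕ
  | [] => 0
  | [_] => 1
  | x :: y :: t => (if x = y then 0 else 1) + syl (y :: t)

/-- The permutations underlying the band generators. -/
def perm3 (i : ZMod 3) : Equiv.Perm (Fin 3) :=
  if i = 0 then Equiv.swap 0 2 else if i = 1 then Equiv.swap 0 1 else Equiv.swap 1 2

lemma perm3_rel : ∀ i : ZMod 3,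
    perm3 (i + 1) * perm3 i * (perm3 (i + 2) * perm3 (i + 1))⁻¹ = 1 := by decide

/-- The homomorphism to the symmetric group on 3 letters (underlying permutation). -/
def permOf : B3 →* Equiv.Perm (Fin 3) :=
  PresentedGroup.toGroup (f := perm3) (by
    rintro r ⟨i, rfl⟩
    simp only [map_mul, map_inv, FreeGroup.lift_apply_of]
    exact perm3_rel i)

/-- The set of band generators and their inverses. -/
def genSet : Set B3 := Set.range a ∪ Set.range (fun i => (a i)⁻¹)

/-- The band-generator word length of a 3-braid. -/
noncomputable def wordLen (x : B3) : ℕ :=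
  sInf { n | ∃ s : List B3, s.length = n ∧ (∀ g ∈ s, g ∈ genSet) ∧ s.prod = x }

/-- The minimal band-generator word length in the conjugacy class. -/
noncomputable def minConjLen (x : B3) : ℕ :=
  sInf { n | ∃ y, IsConj x y ∧ wordLen y = n }

/-- `α` is a summit element with summit exponent `u` if `δ^{-u} * α` is positive and `u` is
the maximal such exponent over the conjugacy class. -/
def IsSummit (α : B3) (u : ℤ) : Prop :=
  δ ^ (-u) * α ∈ Pos ∧ ∀ β : B3, IsConj α β → ∀ v : ℤ, δ ^ (-v) * β ∈ Pos → v ≤ u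



lemma braid_rel (i : ZMod 3) : a (i + 1) * a i = a (i + 2) * a (i + 1) := by
  have h : (QuotientGroup.mk (FreeGroup.of (i + 1) * FreeGroup.of i *
      (FreeGroup.of (i + 2) * FreeGroup.of (i + 1))⁻¹) : B3) = 1 := by
    apply (QuotientGroup.eq_one_iff _).mpr
    exact Subgroup.subset_normalClosure ⟨i, rfl⟩
  have h2 : a (i + 1) * a i * (a (i + 2) * a (i + 1))⁻¹ = 1 := by
    exact h
  exact mul_inv_eq_one.mp h2

lemma delta_eq (i : ZMod 3) : a (i + 1) * a i = δ := by
  have h1 := braid_rel 1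
  have h2 := braid_rel 2
  have h0 := braid_rel 0
  fin_cases i
  · show a 1 * a 0 = δ
    rw [δ]; rw [show ((2:ZMod 3)+1 = 0) from rfl] at h2
    rw [show ((2:ZMod 3)+2 = 1) from rfl] at h2
    rw [show ((1:ZMod 3)+1 = 2) from rfl, show ((1:ZMod 3)+2 = 0) from rfl] at h1
    rw [← h2, ← h1]
  · show a 2 * a 1 = δ
    rfl
  · show a 0 * a 2 = δ
    rw [δ]
    rw [show ((1:ZMod 3)+1 = 2) from rfl, show ((1:ZMod 3)+2 = 0) from rfl] at h1
    rw [h1]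
lemma z3 : (3 : ZMod 3) = 0 := rfl

lemma a_delta (i : ZMod 3) : a i * δ = δ * a (i + 1) := by
  have h1 : a (i + 2) * a (i + 1) = δ := by
    have := delta_eq (i + 1); rwa [show i + 1 + 1 = i + 2 by ring] at this
  have h2 : a i * a (i + 2) = δ := by
    have := delta_eq (i + 2); rwa [show i + 2 + 1 = i by linear_combination z3] at this
  calc a i * δ = a i * (a (i + 2) * a (i + 1)) := by rw [h1]
    _ = (a i * a (i + 2)) * a (i + 1) := by rw [mul_assoc]
    _ = δ * a (i + 1) := by rw [h2]

lemma a_delta_pow (i : ZMod 3) (n : ℕ) : a i * δ ^ n = δ ^ n * a (i + n) := by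
  induction n with
  | zero => simp
  | succ n ih =>
      rw [pow_succ, ← mul_assoc, ih, mul_assoc, a_delta, ← mul_assoc, ← pow_succ]
      congr 2
      push_cast
      ring

lemma a_delta_zpow (i : ZMod 3) (k : ℤ) : a i * δ ^ k = δ ^ k * a (i + k) := by
  obtain ⟨n, rfl | rfl⟩ := k.eq_nat_or_neg
  · simpa [zpow_natCast] using a_delta_pow i n
  · have A := a_delta_pow (i + ((-(n:ℤ) : ℤ) : ZMod 3)) n
    have hidx : i + ((-(n:ℤ) : ℤ) : ZMod 3) + (n : ZMod 3) = i := by push_cast; ring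
    rw [hidx] at A
    have hA : a i = (δ ^ n)⁻¹ * (a (i + ((-(n:ℤ) : ℤ) : ZMod 3)) * δ ^ n) := by
      rw [A]; group
    rw [zpow_neg, zpow_natCast, hA]
    group
@[simp] lemma wordProd_nil : wordProd [] = 1 := rfl

@[simp] lemma wordProd_cons (i : ZMod 3) (l : List (ZMod 3)) :
    wordProd (i :: l) = a i * wordProd l := by
  simp [wordProd]

lemma wordProd_append (l₁ l₂ : List (ZMod 3)) :
    wordProd (l₁ ++ l₂) = wordProd l₁ * wordProd l₂ := by
  simp [wordProd]

lemma wordProd_delta_pow (l : List (ZMod 3)) (n : ℕ) :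
    wordProd l * δ ^ n = δ ^ n * wordProd (l.map (· + (n : ZMod 3))) := by
  induction l with
  | nil => simp
  | cons i t ih =>
      simp only [wordProd_cons, List.map_cons, mul_assoc, ih]
      rw [← mul_assoc, a_delta_pow, mul_assoc]

lemma a_mem_Pos (i : ZMod 3) : a i ∈ Pos :=
  Submonoid.subset_closure ⟨i, rfl⟩

lemma wordProd_mem_Pos (l : List (ZMod 3)) : wordProd l ∈ Pos := by
  induction l with
  | nil => exact one_mem _
  | cons i t ih => rw [wordProd_cons]; exact mul_mem (a_mem_Pos i) ih

lemma delta_mem_Pos : δ ∈ Pos := by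
  rw [δ]; exact mul_mem (a_mem_Pos 2) (a_mem_Pos 1)

lemma pos_eq_word {x : B3} (hx : x ∈ Pos) : ∃ l, x = wordProd l := by
  induction hx using Submonoid.closure_induction with
  | mem y hy => obtain ⟨i, rfl⟩ := hy; exact ⟨[i], by simp⟩
  | one => exact ⟨[], rfl⟩
  | mul y z _ _ hy hz =>
      obtain ⟨l₁, rfl⟩ := hy; obtain ⟨l₂, rfl⟩ := hz
      exact ⟨l₁ ++ l₂, (wordProd_append l₁ l₂).symm⟩

lemma trichotomy : ∀ x y : ZMod 3, y = x ∨ y = x + 1 ∨ x = y + 1 := by decide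

/-- Prepending a letter to a nondecreasing word. -/
lemma prepend (j : ZMod 3) (w : List (ZMod 3)) (hw : NDWord w) :
    ∃ (k : ℕ) (w' : List (ZMod 3)), NDWord w' ∧
      a j * wordProd w = δ ^ k * wordProd w' := by
  cases w with
  | nil => exact ⟨0, [j], List.isChain_singleton j, by simp⟩
  | cons h t =>
      rcases trichotomy j h with hh | hh | hh
      · exact ⟨0, j :: h :: t, List.IsChain.cons_cons (Or.inl hh) hw, by simp⟩
      · exact ⟨0, j :: h :: t, List.IsChain.cons_cons (Or.inr hh) hw, by simp⟩
      · refine ⟨1, t, hw.tail, ?_⟩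
        rw [wordProd_cons, ← mul_assoc, hh, delta_eq, pow_one]

/-- Every positive word normalizes to `δ^k ·(nondecreasing word)`. -/
lemma normalize (l : List (ZMod 3)) :
    ∃ (k : ℕ) (w : List (ZMod 3)), NDWord w ∧ wordProd l = δ ^ k * wordProd w := by
  induction l with
  | nil => exact ⟨0, [], List.isChain_nil, by simp⟩
  | cons i t ih =>
      obtain ⟨k, w, hw, hp⟩ := ih
      obtain ⟨k', w', hw', hp'⟩ := prepend (i + (k : ZMod 3)) w hw
      refine ⟨k + k', w', hw', ?_⟩
      rw [wordProd_cons, hp, ← mul_assoc]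
      have : a i * δ ^ k = δ ^ k * a (i + (k : ZMod 3)) := a_delta_pow i k
      rw [this, mul_assoc, hp', ← mul_assoc, ← pow_add]
@[simp] lemma permOf_a (i : ZMod 3) : permOf (a i) = perm3 i :=
  PresentedGroup.toGroup.of _

lemma permOf_delta : permOf δ = perm3 2 * perm3 1 := by
  rw [δ, map_mul, permOf_a, permOf_a]

lemma sign_perm3 : ∀ i : ZMod 3, Equiv.Perm.sign (perm3 i) = -1 := by decide

lemma sign_wordProd (l : List (ZMod 3)) :
    Equiv.Perm.sign (permOf (wordProd l)) = (-1 : ℤˣ) ^ l.length := by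
  induction l with
  | nil => simp
  | cons i t ih =>
      rw [wordProd_cons, map_mul, map_mul, permOf_a, sign_perm3, ih, List.length_cons, pow_succ]
      exact mul_comm _ _

lemma sign_delta : Equiv.Perm.sign (permOf δ) = 1 := by
  rw [permOf_delta]; decide

lemma perm3_pair : ∀ i : ZMod 3, perm3 i * perm3 (i + 1) = (perm3 2 * perm3 1)⁻¹ := by
  decide

lemma delta_pow_three : (perm3 2 * perm3 1) ^ 3 = 1 := by decide

lemma permOf_delta_zpow_eq_one {k : ℤ} (hk : (k : ZMod 3) = 0) :
    permOf δ ^ k = 1 := by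
  obtain ⟨m, rfl⟩ := (ZMod.intCast_zmod_eq_zero_iff_dvd k 3).mp hk
  rw [zpow_mul, permOf_delta]
  norm_cast
  rw [delta_pow_three, one_zpow]
/-- A strictly ascending word. -/
def Asc (l : List (ZMod 3)) : Prop := l.Chain' (fun x y => y = x + 1)

lemma Asc.ndword {l : List (ZMod 3)} (h : Asc l) : NDWord l :=
  List.IsChain.imp (fun _ _ hxy => Or.inr hxy) h

lemma nd_split {w : List (ZMod 3)} (hw : NDWord w) :
    Asc w ∨ ∃ p c q, w = p ++ c :: c :: q := by
  induction w with
  | nil => exact Or.inl List.isChain_nil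
  | cons x t ih =>
      cases t with
      | nil => exact Or.inl (List.isChain_singleton x)
      | cons y s =>
          rcases List.isChain_cons_cons.mp hw with ⟨hxy, ht⟩
          rcases hxy with h | h
          · exact Or.inr ⟨[], x, s, by rw [h]; rfl⟩
          · rcases ih ht with ha | ⟨p, c, q, hpq⟩
            · exact Or.inl (List.isChain_cons_cons.mpr ⟨h, ha⟩)
            · exact Or.inr ⟨x :: p, c, q, by rw [hpq]; rfl⟩

lemma asc_getLast : ∀ (t : List (ZMod 3)) (x : ZMod 3), Asc (x :: t) →
    (x :: t).getLast (List.cons_ne_nil x t) = x + (t.length : ZMod 3) := by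
  intro t
  induction t with
  | nil => intro x _; simp
  | cons y s ih =>
      intro x h
      rcases List.isChain_cons_cons.mp h with ⟨hxy, ht⟩
      rw [List.getLast_cons (List.cons_ne_nil y s), ih y ht, hxy,
        List.length_cons]
      push_cast
      ring

lemma asc_perm : ∀ (m : ℕ) (w : List (ZMod 3)), Asc w → w.length = 2 * m →
    permOf (wordProd w) = ((permOf δ)⁻¹) ^ m := by
  intro m
  induction m with
  | zero =>
      intro w _ hlen
      rw [List.length_eq_zero_iff.mp hlen]
      simp
  | succ m ih =>
      intro w hasc hlen
      match w with
      | x :: y :: t =>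
          rcases List.isChain_cons_cons.mp hasc with ⟨hxy, ht⟩
          have htlen : t.length = 2 * m := by
            simp only [List.length_cons] at hlen; omega
          rw [wordProd_cons, wordProd_cons, map_mul, map_mul, permOf_a, permOf_a,
            ih t ht.tail htlen, ← mul_assoc, hxy, perm3_pair, permOf_delta, pow_succ']
lemma cycle {α : B3} {u : ℤ} (w' : List (ZMod 3)) (j : ZMod 3)
    (h : IsConj α (δ ^ u * wordProd (w' ++ [j]))) :
    IsConj α (δ ^ u * wordProd ((j + (u : ZMod 3)) :: w')) := by
  refine h.trans (isConj_iff.mpr ⟨a j, ?_⟩)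
  rw [wordProd_append, wordProd_cons, wordProd_nil, mul_one, wordProd_cons]
  have key := a_delta_zpow j u
  calc a j * (δ ^ u * (wordProd w' * a j)) * (a j)⁻¹
      = (a j * δ ^ u) * wordProd w' := by group
    _ = δ ^ u * (a (j + (u : ZMod 3)) * wordProd w') := by rw [key, mul_assoc]

lemma no_delta_up {α : B3} {u : ℤ} (hs : IsSummit α u) (w : List (ZMod 3))
    (h : IsConj α (δ ^ (u + 1) * wordProd w)) : False := by
  have hpos : δ ^ (-(u + 1)) * (δ ^ (u + 1) * wordProd w) ∈ Pos := by
    rw [← mul_assoc, ← zpow_add, neg_add_cancel, zpow_zero, one_mul]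
    exact wordProd_mem_Pos w
  have := hs.2 _ h (u + 1) hpos
  linarith

lemma push_to_end {α : B3} {u : ℤ} (hs : IsSummit α u) :
    ∀ (q p : List (ZMod 3)) (c : ZMod 3), NDWord (p ++ c :: c :: q) →
      IsConj α (δ ^ u * wordProd (p ++ c :: c :: q)) →
      ∃ (w₀ : List (ZMod 3)) (c' : ZMod 3), NDWord (w₀ ++ [c', c']) ∧
        IsConj α (δ ^ u * wordProd (w₀ ++ [c', c'])) := by
  intro q
  induction q using List.reverseRecOn with
  | nil => exact fun p c hnd hc => ⟨p, c, hnd, hc⟩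
  | append_singleton q' j ih =>
      intro p c hnd hc
      have hsplit : p ++ c :: c :: (q' ++ [j]) = (p ++ c :: c :: q') ++ [j] := by
        simp
      rw [hsplit] at hnd hc
      set w' := p ++ c :: c :: q' with hw'
      have hndw' : NDWord w' := (List.isChain_append.mp hnd).1
      have hc' : IsConj α (δ ^ u * wordProd ((j + (u : ZMod 3)) :: w')) :=
        cycle w' j hc
      set f := j + (u : ZMod 3) with hf
      -- w' is nonempty; get its head
      obtain ⟨h₀, tl, hw0⟩ : ∃ h₀ tl, w' = h₀ :: tl := by
        cases p with
        | nil => exact ⟨c, c :: q', rfl⟩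
        | cons x xs => exact ⟨x, xs ++ c :: c :: q', rfl⟩
      rcases trichotomy f h₀ with h | h | h
      · -- h₀ = f : new repeat at front, strictly shorter q'
        have hnd2 : NDWord ((f :: p) ++ c :: c :: q') := by
          show NDWord (f :: w')
        -- prove chain
          rw [hw0]
          exact List.isChain_cons_cons.mpr ⟨Or.inl h, hw0 ▸ hndw'⟩
        have hc2 : IsConj α (δ ^ u * wordProd ((f :: p) ++ c :: c :: q')) := by
          simpa using hc'
        exact ih (f :: p) c hnd2 hc2
      · -- h₀ = f + 1 : ascending, also fine
        have hnd2 : NDWord ((f :: p) ++ c :: c :: q') := by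
          show NDWord (f :: w')
          rw [hw0]
          exact List.isChain_cons_cons.mpr ⟨Or.inr h, hw0 ▸ hndw'⟩
        have hc2 : IsConj α (δ ^ u * wordProd ((f :: p) ++ c :: c :: q')) := by
          simpa using hc'
        exact ih (f :: p) c hnd2 hc2
      · -- f = h₀ + 1 : creates δ, contradicting summit
        exfalso
        apply no_delta_up hs tl
        have : δ ^ u * wordProd (f :: w') = δ ^ (u + 1) * wordProd tl := by
          rw [hw0, wordProd_cons, wordProd_cons, h,
            show a (h₀ + 1) * (a h₀ * wordProd tl) = δ * wordProd tl from by
              rw [← mul_assoc, delta_eq],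
            ← mul_assoc, ← zpow_add_one]
        rwa [this] at hc'

lemma nd_map {w : List (ZMod 3)} (m : ZMod 3) (hw : NDWord w) :
    NDWord (w.map (· + m)) := by
  rw [NDWord, List.Chain', List.isChain_map]
  refine hw.imp ?_
  rintro x y (h | h)
  · exact Or.inl (by rw [h])
  · exact Or.inr (by rw [h]; ring)

lemma shift {α : B3} {u : ℤ} (w : List (ZMod 3)) (m : ZMod 3)
    (h : IsConj α (δ ^ u * wordProd w)) :
    IsConj α (δ ^ u * wordProd (w.map (· + m))) := by
  have hval : ((m.val : ℕ) : ZMod 3) = m := ZMod.natCast_rightInverse m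
  set t := m.val with ht
  refine h.trans (isConj_iff.mpr ⟨(δ ^ t)⁻¹, ?_⟩)
  have key := wordProd_delta_pow w t
  calc (δ ^ t)⁻¹ * (δ ^ u * wordProd w) * ((δ ^ t)⁻¹)⁻¹
      = δ ^ u * ((δ ^ t)⁻¹ * (wordProd w * δ ^ t)) := by group
    _ = δ ^ u * ((δ ^ t)⁻¹ * (δ ^ t * wordProd (w.map (· + ((t : ℕ) : ZMod 3))))) := by
        rw [key]
    _ = δ ^ u * wordProd (w.map (· + m)) := by rw [hval]; group

/-- Corollary 3.3: a summit element `α` closing to a knot, with `δ^{-u} α ≠ 1`, is conjugate to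
`δ^u P a₁²` where `P a₁²` is a nondecreasing positive word. -/
theorem summit_conjugate_a1_squared (α : B3) (u : ℤ) (hs : IsSummit α u)
    (hnt : δ ^ (-u) * α ≠ 1) (h3 : (permOf α).IsThreeCycle) :
    ∃ w₀ : List (ZMod 3), NDWord (w₀ ++ [1, 1]) ∧
      IsConj α (δ ^ u * wordProd (w₀ ++ [1, 1])) := by
  obtain ⟨l, hl⟩ := pos_eq_word hs.1
  obtain ⟨k, w, hw, hwp⟩ := normalize l
  have hδ : δ ^ (-u) * α = δ ^ k * wordProd w := hl.trans hwp
  have hα : α = δ ^ u * (δ ^ k * wordProd w) := by rw [← hδ]; group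
  have hk0 : k = 0 := by
    have hp2 : δ ^ (-(u + (k : ℤ))) * α ∈ Pos := by
      have heq : δ ^ (-(u + (k : ℤ))) * α = wordProd w := by
        rw [hα, ← zpow_natCast δ k]; group
      rw [heq]; exact wordProd_mem_Pos w
    have := hs.2 α (IsConj.refl α) (u + (k : ℤ)) hp2
    omega
  rw [hk0, pow_zero, one_mul] at hα
  have hwne : w ≠ [] := by
    rintro rfl
    exact hnt (by rw [hδ, hk0]; simp)
  -- the length of `w` is even
  have hsignα : Equiv.Perm.sign (permOf α) = 1 := h3.sign
  have hsw : Equiv.Perm.sign (permOf α) = (-1 : ℤˣ) ^ w.length := by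
    have hp : permOf α = (permOf δ) ^ u * permOf (wordProd w) := by
      rw [hα, map_mul, map_zpow]
    rw [hp, map_mul, map_zpow, sign_delta, one_zpow, one_mul, sign_wordProd]
  have heven : Even w.length := by
    by_contra hodd
    rw [Nat.not_even_iff_odd] at hodd
    rw [hodd.neg_one_pow] at hsw
    rw [hsignα] at hsw
    exact absurd hsw.symm (by decide)
  -- find a conjugate whose word contains a repeated adjacent pair
  have hrep : ∃ (p : List (ZMod 3)) (c : ZMod 3) (q : List (ZMod 3)),
      NDWord (p ++ c :: c :: q) ∧ IsConj α (δ ^ u * wordProd (p ++ c :: c :: q)) := by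
    rcases nd_split hw with hasc | ⟨p, c, q, hpcq⟩
    swap
    · exact ⟨p, c, q, hpcq ▸ hw, by rw [← hpcq, ← hα]⟩
    -- ascending case
    match w, hwne with
    | [x], _ => simp [Nat.even_iff] at heven
    | x :: y :: t', _ =>
      rcases List.isChain_cons_cons.mp hasc with ⟨hxy, hasc'⟩
      set j := (x :: y :: t').getLast (List.cons_ne_nil _ _) with hj
      have hjval : j = x + (((y :: t').length : ℕ) : ZMod 3) := asc_getLast _ x hasc
      set w' := (x :: y :: t').dropLast with hw'
      have hsplit : w' ++ [j] = x :: y :: t' := List.dropLast_append_getLast _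
      have hw'eq : w' = x :: (y :: t').dropLast := rfl
      have hndw' : NDWord w' := hw.prefix (List.dropLast_prefix _)
      have hc0 : IsConj α (δ ^ u * wordProd (w' ++ [j])) := by rw [hsplit, ← hα]
      have hc1 := cycle w' j hc0
      set f := j + ((u : ℤ) : ZMod 3) with hf
      rcases trichotomy f x with h | h | h
      · -- x = f : repeated pair at the front
        refine ⟨[], x, (y :: t').dropLast, ?_, ?_⟩
        · refine List.isChain_cons_cons.mpr ⟨Or.inl rfl, ?_⟩
          rw [← hw'eq]; exact hndw'
        · have : f :: w' = [] ++ x :: x :: (y :: t').dropLast := by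
            rw [hw'eq, ← h, List.nil_append]
          rwa [this] at hc1
      · -- x = f + 1 : word stays ascending forever; contradicts the 3-cycle condition
        exfalso
        obtain ⟨m, hm⟩ := heven
        have hlenw : (x :: y :: t').length = 2 * m := by omega
        have hperm : permOf α = (permOf δ) ^ ((u : ℤ) - (m : ℤ)) := by
          rw [hα, map_mul, map_zpow, asc_perm m _ hasc hlenw]
          rw [show ((permOf δ)⁻¹) ^ m = (permOf δ) ^ (-(m : ℤ)) by
            rw [zpow_neg, zpow_natCast, inv_pow]]
          rw [← zpow_add, ← sub_eq_add_neg]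
        have hzero : (((u : ℤ) - (m : ℤ) : ℤ) : ZMod 3) = 0 := by
          have hA : ((t'.length : ℕ) : ZMod 3) + ((u : ℤ) : ZMod 3) + 2 = 0 := by
            have : x = x + (((y :: t').length : ℕ) : ZMod 3) + ((u : ℤ) : ZMod 3) + 1 := by
              conv_lhs => rw [h, hf, hjval]
              try (push_cast; ring)
            have h2 := sub_eq_zero.mpr this.symm
            rw [List.length_cons] at h2
            push_cast at h2 ⊢
            linear_combination h2
          have hB : ((t'.length : ℕ) : ZMod 3) + 2 = 2 * ((m : ℕ) : ZMod 3) := by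
            have : t'.length + 2 = 2 * m := by
              simp only [List.length_cons] at hlenw; omega
            calc ((t'.length : ℕ) : ZMod 3) + 2 = (((t'.length + 2 : ℕ) : ℕ) : ZMod 3) := by
                  push_cast; ring
              _ = 2 * ((m : ℕ) : ZMod 3) := by rw [this]; push_cast; ring
          push_cast
          linear_combination hA - hB - ((m : ℕ) : ZMod 3) * z3
        rw [hperm] at h3
        exact (h3.isCycle.ne_one) (permOf_delta_zpow_eq_one hzero)
      · -- f = x + 1 : a `δ` appears, contradicting the summit property
        exfalso
        apply no_delta_up hs ((y :: t').dropLast)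
        have : δ ^ u * wordProd (f :: w') = δ ^ (u + 1) * wordProd ((y :: t').dropLast) := by
          rw [hw'eq, wordProd_cons, wordProd_cons, h,
            show a (x + 1) * (a x * wordProd ((y :: t').dropLast)) =
                δ * wordProd ((y :: t').dropLast) from by rw [← mul_assoc, delta_eq],
            ← mul_assoc, ← zpow_add_one]
        rwa [this] at hc1
  obtain ⟨p, c, q, hnd, hcj⟩ := hrep
  obtain ⟨w₀, c', hnd', hcj'⟩ := push_to_end hs q p c hnd hcj
  refine ⟨w₀.map (· + (1 - c')), ?_, ?_⟩
  · have := nd_map (1 - c') hnd'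
    have hmapeq : (w₀ ++ [c', c']).map (· + (1 - c')) = w₀.map (· + (1 - c')) ++ [1, 1] := by
      simp only [List.map_append, List.map_cons, List.map_nil]
      norm_num
    rwa [hmapeq] at this
  · have := shift _ (1 - c') hcj'
    have hmapeq : (w₀ ++ [c', c']).map (· + (1 - c')) = w₀.map (· + (1 - c')) ++ [1, 1] := by
      simp only [List.map_append, List.map_cons, List.map_nil]
      norm_num
    rwa [hmapeq] at this


end Braid
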